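/- Let W ⊂ U be a φ-stable k-subspace (φ(W) = W) of dimension s₀, and suppose that for some index m with 1 ≤ m ≤ 2σ₀ - 1 one has W ∩ U_m = W ∩ U_{m+1}. Then φ(W ∩ U_m) = W ∩ U_m, and moreover W ∩ U_{m-1} = W ∩ U_m. -/

import Mathlib

open Module Submodule Function

/-- On a perfect field the Frobenius is surjective, so images of submodules under
Frobenius-semilinear maps are again submodules. -/
instance frobSurj (k : Type*) [Field k] (p : ℕ) [Fact p.Prime] [CharP k p] [PerfectRing k p] :
    RingHomSurjective (frobenius k p) := ⟨surjective_frobenius k p⟩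

/-- An injective Frobenius-semilinear map preserves the finrank of submodules. -/
lemma finrank_map_frob_eq
    (k : Type*) [Field k] (p : ℕ) [Fact p.Prime] [CharP k p] [PerfectRing k p]
    (V : Type*) [AddCommGroup V] [Module k V]
    (φ : V →ₛₗ[frobenius k p] V) (hinj : Function.Injective φ)
    (S : Submodule k V) : finrank k (Submodule.map φ S) = finrank k S := by
  have hbij : Function.Bijective (fun x : S => (⟨φ x, Submodule.mem_map_of_mem x.2⟩ :
      Submodule.map φ S)) := by
    constructor
    · intro a b hab
      have : (φ a : V) = φ b := congrArg Subtype.val hab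
      exact Subtype.ext (hinj this)
    · rintro ⟨y, x, hx, rfl⟩
      exact ⟨⟨x, hx⟩, rfl⟩
  let j : S ≃+ Submodule.map φ S :=
    { Equiv.ofBijective _ hbij with
      map_add' := fun a b => Subtype.ext (by simp) }
  have h : Module.rank k S = Module.rank k (Submodule.map φ S) := by
    refine rank_eq_of_equiv_equiv (R := k) (R' := k)
      (frobenius k p) j (frobeniusEquiv k p).bijective (fun r x => ?_)
    exact Subtype.ext (φ.map_smulₛₗ r x)
  simp only [finrank, h]

theorem stable_intersection_propagates
    (k : Type*) [Field k] (p : ℕ) [Fact p.Prime] [CharP k p] [PerfectRing k p]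
    (V : Type*) [AddCommGroup V] [Module k V] [FiniteDimensional k V]
    (φ : V →ₛₗ[frobenius k p] V) (hφ : Function.Bijective φ)
    (σ₀ : ℕ) (hσ₀ : 1 ≤ σ₀)
    (U : ℕ → Submodule k V)
    (hmono : ∀ m : ℕ, m < 2 * σ₀ → U m ≤ U (m + 1))
    (hdim : ∀ m : ℕ, m ≤ 2 * σ₀ → finrank k ↥(U m) = m)
    (hU0 : U 0 = ⊥)
    (hstable : Submodule.map φ (U (2 * σ₀)) = U (2 * σ₀))
    (hrec1 : ∀ m : ℕ, 0 < m → m < 2 * σ₀ →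
      U (m + 1) = U m ⊔ Submodule.map φ (U m))
    (hrec2 : ∀ m : ℕ, 0 < m → m < 2 * σ₀ →
      Submodule.map φ (U (m - 1)) = U m ⊓ Submodule.map φ (U m))
    (W : Submodule k V) (hWU : W ≤ U (2 * σ₀))
    (hWstable : Submodule.map φ W = W)
    (s₀ : ℕ) (hW : finrank k W = s₀)
    (m : ℕ) (hm1 : 1 ≤ m) (hm2 : m ≤ 2 * σ₀ - 1)
    (heq : W ⊓ U m = W ⊓ U (m + 1)) :
    Submodule.map φ (W ⊓ U m) = W ⊓ U m ∧ W ⊓ U (m - 1) = W ⊓ U m := by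
  have hm2' : m < 2 * σ₀ := by omega
  -- φ(W ∩ U m) ≤ W ∩ U m
  have hle : Submodule.map φ (W ⊓ U m) ≤ W ⊓ U m := by
    refine le_trans (le_inf ?_ ?_) heq.ge
    · exact le_trans (Submodule.map_mono (inf_le_left : W ⊓ U m ≤ W)) (le_of_eq hWstable)
    · refine le_trans (Submodule.map_mono (inf_le_right : W ⊓ U m ≤ U m)) ?_
      rw [hrec1 m hm1 hm2']
      exact le_sup_right
  have hfr : finrank k (Submodule.map φ (W ⊓ U m)) = finrank k (W ⊓ U m : Submodule k V) :=
    finrank_map_frob_eq k p V φ hφ.1 _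
  have h1 : Submodule.map φ (W ⊓ U m) = W ⊓ U m :=
    Submodule.eq_of_le_of_finrank_le hle (le_of_eq hfr.symm)
  refine ⟨h1, le_antisymm (inf_le_inf_left W ?_) ?_⟩
  · have := hmono (m - 1) (by omega)
    have hm : m - 1 + 1 = m := by omega
    rwa [hm] at this
  · intro x hx
    have hxW : x ∈ W := hx.1
    have hxU : x ∈ U m := hx.2
    have hφx : φ x ∈ Submodule.map φ (U (m - 1)) := by
      rw [hrec2 m hm1 hm2']
      refine ⟨?_, Submodule.mem_map_of_mem hxU⟩
      have : φ x ∈ W ⊓ U m := h1 ▸ Submodule.mem_map_of_mem hx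
      exact this.2
    obtain ⟨y, hy, hyx⟩ := hφx
    have : y = x := hφ.1 hyx
    exact ⟨hxW, this ▸ hy⟩
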